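/- arXiv:2505.01793 — 13 statements merged into one kernel-verified Lean document; each statement's English description precedes it below -/
import Mathlib

section
/- Suppose f < εn for a constant 0 < ε < 1/2, and let B be the total number of incorrect bits across the prediction vectors of all honest processes. Then the number of processes misclassified by at least one honest process after the majority-voting classification is at most B / (⌈n/2⌉ − f), and hence O(B/n). -/
open Classical in
/-- If `f < εn` for a constant `0 < ε < 1/2` and `B` is the total number of
incorrect prediction bits across the prediction vectors of all honest processes, then the
number of processes misclassified (by at least one honest process) after the majority-voting
classification is at most `B / (⌈n/2⌉ − f)`, stated multiplicatively:
`(#misclassified) * ((n+1)/2 − f) ≤ B` (and hence the count is `O(B/n)`). -/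
theorem misclassified_count_bound
    (n f B : ℕ) (ε : ℝ) (hε0 : 0 < ε) (hε : ε < 1/2)
    (H F : Finset (Fin n))
    (hpart : ∀ i, i ∈ H ∨ i ∈ F) (hdisj : Disjoint H F)
    (hF : F.card = f) (hf : (f : ℝ) < ε * n)
    (a : Fin n → Fin n → Bool)              -- actual prediction vectors of the processes
    (recv : Fin n → Fin n → Fin n → Bool)   -- recv i s = vector process i received from s
    (hrecv : ∀ i ∈ H, ∀ s ∈ H, recv i s = a s)
    (c : Fin n → Fin n → Bool)              -- resulting classification vectors
    (hc : ∀ i ∈ H, ∀ j, (c i j = true ↔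
      (n + 2) / 2 ≤ (Finset.univ.filter (fun s => recv i s j = true)).card))
    (hB : B = ∑ i ∈ H, (Finset.univ.filter (fun j => a i j ≠ decide (j ∈ H))).card) :
    (Finset.univ.filter (fun j : Fin n => ∃ i ∈ H, c i j ≠ decide (j ∈ H))).card
      * ((n + 1) / 2 - f) ≤ B := by
  have hHF : H ∪ F = Finset.univ := by
    apply Finset.eq_univ_iff_forall.mpr
    intro i
    rcases hpart i with h | h
    · exact Finset.mem_union_left _ h
    · exact Finset.mem_union_right _ h
  have hHcard : H.card + f = n := by
    have h1 := Finset.card_union_of_disjoint hdisj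
    rw [hHF] at h1
    simp [Finset.card_univ, hF] at h1
    omega
  have key : ∀ j ∈ Finset.univ.filter (fun j : Fin n => ∃ i ∈ H, c i j ≠ decide (j ∈ H)),
      (n + 1) / 2 - f ≤ (H.filter (fun s => a s j ≠ decide (j ∈ H))).card := by
    intro j hj
    simp only [Finset.mem_filter] at hj
    obtain ⟨-, i, hi, hcij⟩ := hj
    by_cases hjH : j ∈ H
    · -- j is honest, so some honest i classified it as false
      have hdec : decide (j ∈ H) = true := decide_eq_true hjH
      have hcf : c i j = false := by
        rw [hdec] at hcij
        cases h' : c i j <;> simp_all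
      have hT : (Finset.univ.filter (fun s => recv i s j = true)).card < (n + 2) / 2 := by
        have h2 := hc i hi j
        rw [hcf] at h2
        simp only [Bool.false_eq_true, false_iff, not_le] at h2
        exact h2
      have hsub : H.filter (fun s => a s j = true) ⊆
          Finset.univ.filter (fun s => recv i s j = true) := by
        intro s hs
        simp only [Finset.mem_filter] at hs ⊢
        refine ⟨Finset.mem_univ s, ?_⟩
        rw [hrecv i hi s hs.1]
        exact hs.2
      have h1 : (H.filter (fun s => a s j = true)).card ≤
          (Finset.univ.filter (fun s => recv i s j = true)).card :=
        Finset.card_le_card hsub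
      have h2 : (H.filter (fun s => a s j = true)).card
          + (H.filter (fun s => ¬ (a s j = true))).card = H.card :=
        Finset.card_filter_add_card_filter_not _
      have h3 : H.filter (fun s => a s j ≠ decide (j ∈ H))
          = H.filter (fun s => ¬ (a s j = true)) := by
        apply Finset.filter_congr
        intro s _
        rw [hdec]
      rw [h3]
      omega
    · -- j is faulty, so some honest i classified it as true
      have hdec : decide (j ∈ H) = false := decide_eq_false hjH
      have hct : c i j = true := by
        rw [hdec] at hcij
        cases h' : c i j <;> simp_all
      have hT : (n + 2) / 2 ≤ (Finset.univ.filter (fun s => recv i s j = true)).card :=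
        (hc i hi j).mp hct
      have hsplit : (Finset.univ.filter (fun s => recv i s j = true)).card ≤
          (H.filter (fun s => recv i s j = true)).card
          + (F.filter (fun s => recv i s j = true)).card := by
        rw [← hHF, Finset.filter_union]
        exact Finset.card_union_le _ _
      have hFle : (F.filter (fun s => recv i s j = true)).card ≤ f := by
        rw [← hF]
        exact Finset.card_filter_le _ _
      have hHeq : H.filter (fun s => recv i s j = true)
          = H.filter (fun s => a s j ≠ decide (j ∈ H)) := by
        apply Finset.filter_congr
        intro s hs
        rw [hrecv i hi s hs, hdec]
        simp
      rw [hHeq] at hsplit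
      omega
  have hBsum : B = ∑ j : Fin n, (H.filter (fun s => a s j ≠ decide (j ∈ H))).card := by
    rw [hB]
    simp only [Finset.card_filter]
    rw [Finset.sum_comm]
  calc (Finset.univ.filter (fun j : Fin n => ∃ i ∈ H, c i j ≠ decide (j ∈ H))).card
        * ((n + 1) / 2 - f)
      = ∑ _j ∈ Finset.univ.filter (fun j : Fin n => ∃ i ∈ H, c i j ≠ decide (j ∈ H)),
          ((n + 1) / 2 - f) := by
        rw [Finset.sum_const, smul_eq_mul]
    _ ≤ ∑ j ∈ Finset.univ.filter (fun j : Fin n => ∃ i ∈ H, c i j ≠ decide (j ∈ H)),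
          (H.filter (fun s => a s j ≠ decide (j ∈ H))).card :=
        Finset.sum_le_sum key
    _ ≤ ∑ j : Fin n, (H.filter (fun s => a s j ≠ decide (j ∈ H))).card :=
        Finset.sum_le_sum_of_subset (Finset.filter_subset _ _)
    _ = B := hBsum.symm
end

section
/- Let c, ĉ ∈ {0,1}^n be classification vectors, where ĉ is the correct classification, and suppose c and ĉ differ in at most m positions (c misclassifies m processes). If c[i] = ĉ[i] (process p_i is properly classified by c), then the positions of index i in the orderings π(c) and π(ĉ) differ by at most m. -/
/-- The (1-indexed) position of index `i` in the ordering `π(c)`, which places indices with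
`c`-bit `1` first (in increasing order), followed by indices with `c`-bit `0`
(in increasing order). -/
def piPos {n : ℕ} (c : Fin n → Bool) (i : Fin n) : ℕ :=
  if c i then (Finset.univ.filter (fun j => j ≤ i ∧ c j)).card
  else (i : ℕ) + 1 + (Finset.univ.filter (fun j => i < j ∧ c j)).card

lemma card_le_of_sdiff_subset {α : Type*} [DecidableEq α] {s t u : Finset α}
    (h : s \ t ⊆ u) : s.card ≤ t.card + u.card := by
  calc s.card ≤ (t ∪ (s \ t)).card := Finset.card_le_card (by
        intro x hx
        by_cases hxt : x ∈ t
        · exact Finset.mem_union_left _ hxt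
        · exact Finset.mem_union_right _ (Finset.mem_sdiff.mpr ⟨hx, hxt⟩))
    _ ≤ t.card + (s \ t).card := Finset.card_union_le _ _
    _ ≤ t.card + u.card := Nat.add_le_add_left (Finset.card_le_card h) _

lemma filter_card_diff_bound {n : ℕ} (c chat : Fin n → Bool) (p : Fin n → Prop)
    [DecidablePred p] :
    |((Finset.univ.filter (fun j => p j ∧ c j)).card : ℤ)
      - ((Finset.univ.filter (fun j => p j ∧ chat j)).card : ℤ)|
      ≤ ((Finset.univ.filter (fun j => c j ≠ chat j)).card : ℤ) := by
  rw [abs_sub_le_iff]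
  constructor <;>
  · rw [sub_le_iff_le_add]
    norm_cast
    apply card_le_of_sdiff_subset
    intro x hx
    simp only [Finset.mem_sdiff, Finset.mem_filter, Finset.mem_univ, true_and] at hx ⊢
    rcases hx with ⟨⟨hp, hc⟩, hnot⟩
    push_neg at hnot
    exact ⟨hp, by simp_all⟩

/-- If classification vectors `c` and `ĉ` differ in at most `m` positions and
`c i = ĉ i` (process `i` is properly classified by `c`), then the positions of `i` in the
orderings `π(c)` and `π(ĉ)` differ by at most `m`. -/
theorem position_shift_bound {n : ℕ} (c chat : Fin n → Bool) (m : ℕ)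
    (hm : (Finset.univ.filter (fun j => c j ≠ chat j)).card ≤ m)
    (i : Fin n) (hi : c i = chat i) :
    |(piPos c i : ℤ) - (piPos chat i : ℤ)| ≤ (m : ℤ) := by
  unfold piPos
  rw [hi]
  by_cases h : chat i = true
  · simp only [h, if_true]
    calc _ ≤ ((Finset.univ.filter (fun j => c j ≠ chat j)).card : ℤ) :=
          filter_card_diff_bound c chat (fun j => j ≤ i)
      _ ≤ (m : ℤ) := by exact_mod_cast hm
  · simp only [h, if_false]
    have : ((i : ℕ) + 1 + (Finset.univ.filter (fun j => i < j ∧ c j)).card : ℤ)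
        - ((i : ℕ) + 1 + (Finset.univ.filter (fun j => i < j ∧ chat j)).card : ℤ)
        = ((Finset.univ.filter (fun j => i < j ∧ c j)).card : ℤ)
          - ((Finset.univ.filter (fun j => i < j ∧ chat j)).card : ℤ) := by ring
    push_cast
    rw [this]
    calc _ ≤ ((Finset.univ.filter (fun j => c j ≠ chat j)).card : ℤ) :=
          filter_card_diff_bound c chat (fun j => i < j)
      _ ≤ (m : ℤ) := by exact_mod_cast hm
end

section
/- Suppose the total number of misclassified processes (processes misclassified by at least one honest process) is k_A, and at most t processes are faulty. If c is the classification vector of an honest process, p_i is a faulty process, and the position of i in π(c) is at most n − t − k_A, then c misclassifies p_i (i.e., c[i] = 1). -/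
open Classical in
/-- If `kA` processes are misclassified by at least one honest process, at most `t`
processes are faulty, `c i` is the classification vector of an honest process `i`, `p` is a
faulty process, and the position of `p` in `π(c i)` is at most `n − t − kA`, then `c i`
misclassifies `p` (i.e., `c i p = true`). -/
theorem early_faulty_is_misclassified {n t kA : ℕ}
    (H F : Finset (Fin n))
    (hpart : ∀ i, i ∈ H ∨ i ∈ F) (hdisj : Disjoint H F)
    (hFt : F.card ≤ t)
    (c : Fin n → Fin n → Bool)  -- classification vectors (those of honest processes matter)
    (hkA : (Finset.univ.filter (fun j : Fin n => ∃ i ∈ H, c i j ≠ decide (j ∈ H))).card = kA)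
    (i : Fin n) (hi : i ∈ H)
    (p : Fin n) (hp : p ∈ F)
    (hpos : piPos (c i) p ≤ n - t - kA) :
    c i p = true := by
  by_contra h
  have hc : c i p = false := by simpa using h
  set M := Finset.univ.filter (fun j : Fin n => ∃ i ∈ H, c i j ≠ decide (j ∈ H)) with hM
  set S := Finset.univ.filter (fun j : Fin n => p < j ∧ c i j = false) with hS
  set T := Finset.univ.filter (fun j : Fin n => p < j ∧ c i j) with hT
  set L := Finset.univ.filter (fun j : Fin n => j ≤ p) with hL
  -- L, T, S partition univ
  have hunion : (L ∪ T) ∪ S = Finset.univ := by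
    ext j
    simp only [hL, hT, hS, Finset.mem_union, Finset.mem_filter, Finset.mem_univ, true_and,
      Finset.mem_univ, iff_true]
    rcases le_or_gt j p with h' | h'
    · exact Or.inl (Or.inl h')
    · cases hcj : c i j
      · exact Or.inr ⟨h', rfl⟩
      · exact Or.inl (Or.inr ⟨h', rfl⟩)
  have hdLT : Disjoint L T := by
    rw [Finset.disjoint_left]
    intro j hj hj'
    simp only [hL, hT, Finset.mem_filter] at hj hj'
    exact absurd hj'.2.1 (not_lt.mpr hj.2)
  have hdLTS : Disjoint (L ∪ T) S := by
    rw [Finset.disjoint_left]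
    intro j hj hj'
    simp only [hL, hT, hS, Finset.mem_union, Finset.mem_filter] at hj hj'
    rcases hj with hj | hj
    · exact absurd hj'.2.1 (not_lt.mpr hj.2)
    · rw [hj.2.2] at hj'; exact Bool.true_eq_false.mp hj'.2.2
  have hcardsum : L.card + T.card + S.card = n := by
    have := Finset.card_union_of_disjoint hdLTS
    rw [hunion, Finset.card_union_of_disjoint hdLT] at this
    simpa using this.symm
  have hLcard : L.card = (p : ℕ) + 1 := by
    have : L = Finset.Iic p := by
      ext j; simp [hL]
    rw [this]
    simp [Nat.card_Iic]
  -- piPos value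
  have hpip : piPos (c i) p = (p : ℕ) + 1 + T.card := by
    simp [piPos, hc, hT]
  -- S ⊆ F.erase p ∪ M
  have hsub : S ⊆ F.erase p ∪ M := by
    intro j hj
    simp only [hS, Finset.mem_filter, Finset.mem_univ, true_and] at hj
    rcases hpart j with hjH | hjF
    · apply Finset.mem_union_right
      simp only [hM, Finset.mem_filter, Finset.mem_univ, true_and]
      exact ⟨i, hi, by simp [hj.2, hjH]⟩
    · apply Finset.mem_union_left
      exact Finset.mem_erase.mpr ⟨ne_of_gt hj.1, hjF⟩
  have hScard : S.card ≤ (F.erase p).card + M.card :=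
    le_trans (Finset.card_le_card hsub) (Finset.card_union_le _ _)
  have hFe : (F.erase p).card + 1 = F.card := Finset.card_erase_add_one hp
  have hMcard : M.card = kA := hkA
  omega
end

section
/- Suppose classification vectors c and c' (of honest processes) both misclassify the faulty process p_i as honest (c[i] = c'[i] = 1), and in total k_A processes are misclassified by at least one honest process. Then the positions of i in π(c) and π(c') differ by at most k_A − 1. -/
open Classical in
/-- If the classification vectors of two honest processes `i₀` and `i₁` both
misclassify the faulty process `p` as honest, and in total `kA` processes are misclassified by
at least one honest process, then the positions of `p` in the two orderings differ by at most
`kA − 1`. -/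
theorem misclassified_faulty_positions_close {n kA : ℕ}
    (H F : Finset (Fin n))
    (hpart : ∀ i, i ∈ H ∨ i ∈ F) (hdisj : Disjoint H F)
    (c : Fin n → Fin n → Bool)  -- classification vectors (those of honest processes matter)
    (hkA : (Finset.univ.filter (fun j : Fin n => ∃ i ∈ H, c i j ≠ decide (j ∈ H))).card = kA)
    (i₀ : Fin n) (hi₀ : i₀ ∈ H) (i₁ : Fin n) (hi₁ : i₁ ∈ H)
    (p : Fin n) (hp : p ∈ F)
    (hc₀ : c i₀ p = true) (hc₁ : c i₁ p = true) :
    |(piPos (c i₀) p : ℤ) - (piPos (c i₁) p : ℤ)| ≤ (kA : ℤ) - 1 := by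
  classical
  set A := Finset.univ.filter (fun j : Fin n => ∃ i ∈ H, c i j ≠ decide (j ∈ H)) with hA
  have hpH : p ∉ H := Finset.disjoint_right.mp hdisj hp
  have hpA : p ∈ A := by
    simp only [hA, Finset.mem_filter, Finset.mem_univ, true_and]
    exact ⟨i₀, hi₀, by simp [hc₀, hpH]⟩
  have hkApos : 1 ≤ kA := by
    rw [← hkA]
    exact Finset.card_pos.mpr ⟨p, hpA⟩
  have key : ∀ a b : Fin n, a ∈ H → b ∈ H → c b p = true →
      (Finset.univ.filter (fun j => j ≤ p ∧ c a j)) \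
        (Finset.univ.filter (fun j => j ≤ p ∧ c b j)) ⊆ A.erase p := by
    intro a b ha hb hcb j hj
    simp only [Finset.mem_sdiff, Finset.mem_filter, Finset.mem_univ, true_and] at hj
    obtain ⟨⟨hjp, hcaj⟩, hnot⟩ := hj
    have hcbj : c b j = false := by
      cases h : c b j
      · rfl
      · exact absurd ⟨hjp, h⟩ hnot
    have hjne : j ≠ p := by rintro rfl; rw [hcb] at hcbj; exact Bool.noConfusion hcbj
    refine Finset.mem_erase.mpr ⟨hjne, ?_⟩
    simp only [hA, Finset.mem_filter, Finset.mem_univ, true_and]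
    by_cases hjH : j ∈ H
    · exact ⟨b, hb, by simp [hcbj, hjH]⟩
    · exact ⟨a, ha, by simp [hcaj, hjH]⟩
  have hErase : (A.erase p).card = kA - 1 := by
    rw [Finset.card_erase_of_mem hpA, hkA]
  have bound : ∀ a b : Fin n, a ∈ H → b ∈ H → c b p = true →
      (Finset.univ.filter (fun j => j ≤ p ∧ c a j)).card ≤
        (Finset.univ.filter (fun j => j ≤ p ∧ c b j)).card + (kA - 1) := by
    intro a b ha hb hcb
    calc (Finset.univ.filter (fun j => j ≤ p ∧ c a j)).card
        ≤ ((Finset.univ.filter (fun j => j ≤ p ∧ c a j)) \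
            (Finset.univ.filter (fun j => j ≤ p ∧ c b j))).card +
          (Finset.univ.filter (fun j => j ≤ p ∧ c b j)).card :=
          Finset.card_le_card_sdiff_add_card
      _ ≤ (A.erase p).card + (Finset.univ.filter (fun j => j ≤ p ∧ c b j)).card :=
          Nat.add_le_add_right (Finset.card_le_card (key a b ha hb hcb)) _
      _ = (Finset.univ.filter (fun j => j ≤ p ∧ c b j)).card + (kA - 1) := by
          rw [hErase]; ring
  have h01 := bound i₀ i₁ hi₀ hi₁ hc₁
  have h10 := bound i₁ i₀ hi₁ hi₀ hc₀
  have e0 : piPos (c i₀) p = (Finset.univ.filter (fun j => j ≤ p ∧ c i₀ j)).card := by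
    simp [piPos, hc₀]
  have e1 : piPos (c i₁) p = (Finset.univ.filter (fun j => j ≤ p ∧ c i₁ j)).card := by
    simp [piPos, hc₁]
  rw [abs_sub_le_iff]
  constructor <;> · rw [e0, e1]; push_cast; omega
end

section
/- Suppose at most k_H honest processes are misclassified as faulty by at least one honest process, and r ≤ n − t − k_H. Then the number of honest processes p_i whose own index i appears among the first r positions of their own ordering π(c_i) is at most r + k_H. -/
open Classical in
/-- If at most `kH` honest processes are misclassified as faulty by at least one
honest process, and `r ≤ n − t − kH` (written `r + t + kH ≤ n`), then the number of honest
processes `i` whose own index appears among the first `r` positions of their own ordering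
`π(c i)` is at most `r + kH`. -/
theorem honest_broadcasters_bound {n t kH r : ℕ}
    (H F : Finset (Fin n))
    (hpart : ∀ i, i ∈ H ∨ i ∈ F) (hdisj : Disjoint H F)
    (hFt : F.card ≤ t)
    (c : Fin n → Fin n → Bool)  -- classification vectors (those of honest processes matter)
    (hkH : (H.filter (fun j => ∃ i ∈ H, c i j = false)).card ≤ kH)
    (hr : r + t + kH ≤ n) :
    (H.filter (fun i => piPos (c i) i ≤ r)).card ≤ r + kH := by
  classical
  set M := H.filter (fun j => ∃ i ∈ H, c i j = false) with hM
  set A := H \ M with hA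
  set T := A.filter (fun i => (A.filter (fun j => j ≤ i)).card ≤ r) with hT
  have hsub : H.filter (fun i => piPos (c i) i ≤ r) ⊆ M ∪ T := by
    intro i hi
    simp only [Finset.mem_filter] at hi
    obtain ⟨hiH, hpos⟩ := hi
    by_cases hiM : i ∈ M
    · exact Finset.mem_union_left _ hiM
    · refine Finset.mem_union_right _ ?_
      have hiA : i ∈ A := Finset.mem_sdiff.mpr ⟨hiH, hiM⟩
      have hcii : c i i = true := by
        by_contra h
        exact hiM (Finset.mem_filter.mpr ⟨hiH, ⟨i, hiH, by simpa using h⟩⟩)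
      rw [piPos, if_pos hcii] at hpos
      refine Finset.mem_filter.mpr ⟨hiA, le_trans (Finset.card_le_card ?_) hpos⟩
      intro j hj
      simp only [Finset.mem_filter] at hj ⊢
      obtain ⟨hjA, hji⟩ := hj
      have hjH : j ∈ H := (Finset.mem_sdiff.mp hjA).1
      have hjM : j ∉ M := (Finset.mem_sdiff.mp hjA).2
      refine ⟨Finset.mem_univ j, hji, ?_⟩
      by_contra h
      exact hjM (Finset.mem_filter.mpr ⟨hjH, ⟨i, hiH, by simpa using h⟩⟩)
  have key : ∀ a b : Fin n, a ∈ A → b ∈ A → a < b →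
      (A.filter (fun j => j ≤ a)).card < (A.filter (fun j => j ≤ b)).card := by
    intro a b ha hb hab
    apply Finset.card_lt_card
    have hsub2 : A.filter (fun j => j ≤ a) ⊆ A.filter (fun j => j ≤ b) := by
      intro j hj
      simp only [Finset.mem_filter] at hj ⊢
      exact ⟨hj.1, le_trans hj.2 hab.le⟩
    refine (Finset.ssubset_iff_of_subset hsub2).mpr ⟨b, ?_, ?_⟩
    · exact Finset.mem_filter.mpr ⟨hb, le_refl b⟩
    · intro h
      exact absurd (Finset.mem_filter.mp h).2 (not_le.mpr hab)
  have hTcard : T.card ≤ r := by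
    have h1 : T.card ≤ (Finset.Icc 1 r).card := by
      apply Finset.card_le_card_of_injOn (fun i => (A.filter (fun j => j ≤ i)).card)
      · intro i hi
        replace hi : i ∈ T := hi
        simp only [hT, Finset.mem_filter] at hi
        refine Finset.mem_Icc.mpr ⟨?_, hi.2⟩
        exact Finset.card_pos.mpr ⟨i, Finset.mem_filter.mpr ⟨hi.1, le_refl i⟩⟩
      · intro a ha b hb hab
        have haA : a ∈ A := (Finset.mem_filter.mp (Finset.mem_coe.mp ha)).1
        have hbA : b ∈ A := (Finset.mem_filter.mp (Finset.mem_coe.mp hb)).1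
        rcases lt_trichotomy a b with h | h | h
        · exact absurd hab (Nat.ne_of_lt (key a b haA hbA h))
        · exact h
        · exact absurd hab.symm (Nat.ne_of_lt (key b a hbA haA h))
    simpa [Nat.card_Icc] using h1
  calc (H.filter (fun i => piPos (c i) i ≤ r)).card
      ≤ (M ∪ T).card := Finset.card_le_card hsub
    _ ≤ M.card + T.card := Finset.card_union_le M T
    _ ≤ r + kH := by omega
end

section
/- In the unauthenticated graded consensus with core set protocol, all honest processes that adopt a non-⊥ value b_i in round 1 (i.e., receive some value at least 2k+1 times from processes in their listening set L_i of size 3k+1, where L_i contains a common core G of at least 2k+1 honest processes) adopt the same value, and that value is the input of some honest process. -/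
/-- In round 1 of the unauthenticated graded consensus with core set protocol,
every honest process has a listening set `L i` of size `3k+1` containing a common core `G` of
at least `2k+1` honest processes; each honest process `s` with `s ∈ L s` broadcasts its input
`v s` (modelled by `recv i s = some (v s)`; honest non-broadcasters send nothing).  If honest
processes `i` and `i'` each adopt a value (receive a value at least `2k+1` times from
processes in their listening sets), they adopt the same value, and that value is the input of
some honest process. -/
theorem gc_round1_adopted_values_agree {V : Type} [DecidableEq V] {n k : ℕ}
    (H G : Finset (Fin n)) (L : Fin n → Finset (Fin n)) (v : Fin n → V)
    (hL : ∀ i ∈ H, (L i).card = 3 * k + 1)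
    (hGH : G ⊆ H) (hGcard : 2 * k + 1 ≤ G.card)
    (hGL : ∀ i ∈ H, G ⊆ L i)
    (recv : Fin n → Fin n → Option V)  -- recv i s = value i received from s in round 1
    (hrecv : ∀ i ∈ H, ∀ s ∈ H, recv i s = if s ∈ L s then some (v s) else none)
    (i : Fin n) (hi : i ∈ H) (i' : Fin n) (hi' : i' ∈ H) (x x' : V)
    (hx : 2 * k + 1 ≤ ((L i).filter (fun s => recv i s = some x)).card)
    (hx' : 2 * k + 1 ≤ ((L i').filter (fun s => recv i' s = some x')).card) :
    x = x' ∧ ∃ h ∈ H, x = v h := by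
  classical
  -- general bound: for honest j with filter card ≥ 2k+1, its intersection with G
  -- has card ≥ G.card - k
  have key : ∀ (j : Fin n), j ∈ H → ∀ (y : V),
      2 * k + 1 ≤ ((L j).filter (fun s => recv j s = some y)).card →
      G.card - k ≤ (((L j).filter (fun s => recv j s = some y)) ∩ G).card := by
    intro j hj y hy
    set F := (L j).filter (fun s => recv j s = some y) with hF
    have hFL : F ⊆ L j := Finset.filter_subset _ _
    have hsplit : F.card ≤ (F ∩ G).card + (L j \ G).card := by
      have : F ⊆ (F ∩ G) ∪ (L j \ G) := by
        intro s hs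
        by_cases hsG : s ∈ G
        · exact Finset.mem_union_left _ (Finset.mem_inter.mpr ⟨hs, hsG⟩)
        · exact Finset.mem_union_right _ (Finset.mem_sdiff.mpr ⟨hFL hs, hsG⟩)
      calc F.card ≤ ((F ∩ G) ∪ (L j \ G)).card := Finset.card_le_card this
        _ ≤ (F ∩ G).card + (L j \ G).card := Finset.card_union_le _ _
    have hsd : (L j \ G).card = 3 * k + 1 - G.card := by
      rw [Finset.card_sdiff_of_subset (hGL j hj), hL j hj]
    have hGle : G.card ≤ 3 * k + 1 := by
      rw [← hL j hj]; exact Finset.card_le_card (hGL j hj)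
    omega
  have hAi := key i hi x hx
  have hAi' := key i' hi' x' hx'
  set A := ((L i).filter (fun s => recv i s = some x)) ∩ G with hA
  set B := ((L i').filter (fun s => recv i' s = some x')) ∩ G with hB
  have hAG : A ⊆ G := Finset.inter_subset_right
  have hBG : B ⊆ G := Finset.inter_subset_right
  have hUnion : (A ∪ B).card ≤ G.card :=
    Finset.card_le_card (Finset.union_subset hAG hBG)
  have hinter : 1 ≤ (A ∩ B).card := by
    have := Finset.card_inter_add_card_union A B
    omega
  obtain ⟨s, hs⟩ := Finset.card_pos.mp hinter
  have hsA : s ∈ A := (Finset.mem_inter.mp hs).1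
  have hsB : s ∈ B := (Finset.mem_inter.mp hs).2
  have hsG : s ∈ G := hAG hsA
  have hsH : s ∈ H := hGH hsG
  have h1 : recv i s = some x := (Finset.mem_filter.mp (Finset.mem_inter.mp hsA).1).2
  have h2 : recv i' s = some x' := (Finset.mem_filter.mp (Finset.mem_inter.mp hsB).1).2
  rw [hrecv i hi s hsH] at h1
  rw [hrecv i' hi' s hsH] at h2
  by_cases hLs : s ∈ L s
  · simp [hLs] at h1 h2
    exact ⟨h1.symm.trans h2, s, hsH, h1.symm⟩
  · simp [hLs] at h1
end

section
/- In the unauthenticated graded consensus with core set protocol, if every honest process has the same input value v, then every honest process returns (v, 1) (strong unanimity). -/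
/-- Strong unanimity of graded-consensus-with-core-set: each honest process `i`
has input `v i`, a listening set `L i` of size `3k+1` containing a common core `G ⊆ H` of at
least `2k+1` honest processes.  Round 1: honest `s` with `s ∈ L s` broadcasts `v s`; `b i` is
the value received at least `2k+1` times from `L i` (else `none`).  Round 2: honest `s` with
`s ∈ L s` and `b s ≠ none` broadcasts `b s`; `out i` follows the algorithm's return rules.
If every honest process has the same input value `w`, then every honest process returns
`(w, true)` (grade 1). -/
theorem gc_core_set_strong_unanimity {V : Type} [DecidableEq V] {n k : ℕ}
    (H G : Finset (Fin n)) (L : Fin n → Finset (Fin n)) (v : Fin n → V)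
    (hL : ∀ i ∈ H, (L i).card = 3 * k + 1)
    (hGH : G ⊆ H) (hGcard : 2 * k + 1 ≤ G.card)
    (hGL : ∀ i ∈ H, G ⊆ L i)
    -- round 1
    (recv1 : Fin n → Fin n → Option V)
    (hrecv1 : ∀ i ∈ H, ∀ s ∈ H, recv1 i s = if s ∈ L s then some (v s) else none)
    (b : Fin n → Option V)
    (hb : ∀ i ∈ H, ∀ x : V,
      (b i = some x ↔ 2 * k + 1 ≤ ((L i).filter (fun s => recv1 i s = some x)).card))
    -- round 2
    (recv2 : Fin n → Fin n → Option V)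
    (hrecv2 : ∀ i ∈ H, ∀ s ∈ H, recv2 i s = if s ∈ L s then b s else none)
    -- outputs, following the return rules of the algorithm
    (out : Fin n → V × Bool)
    (hout1 : ∀ i ∈ H, ∀ x : V, b i = some x →
      (out i).1 = x ∧
      ((out i).2 = true ↔ 2 * k + 1 ≤ ((L i).filter (fun s => recv2 i s = some x)).card))
    (hout2 : ∀ i ∈ H, b i = none →
      (out i).2 = false ∧
      ((∃ x : V, k + 1 ≤ ((L i).filter (fun s => recv2 i s = some x)).card) →
        k + 1 ≤ ((L i).filter (fun s => recv2 i s = some ((out i).1))).card) ∧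
      ((¬ ∃ x : V, k + 1 ≤ ((L i).filter (fun s => recv2 i s = some x)).card) →
        (out i).1 = v i))
    (w : V) (hunan : ∀ i ∈ H, v i = w) :
    ∀ i ∈ H, out i = (w, true) := by
  have hself : ∀ s ∈ G, s ∈ L s := fun s hs => hGL s (hGH hs) hs
  have hbG : ∀ i ∈ H, b i = some w := by
    intro i hi
    refine (hb i hi w).2 ?_
    calc 2*k+1 ≤ G.card := hGcard
      _ ≤ _ := Finset.card_le_card ?_
    intro s hs
    rw [Finset.mem_filter]
    refine ⟨hGL i hi hs, ?_⟩
    rw [hrecv1 i hi s (hGH hs), if_pos (hself s hs), hunan s (hGH hs)]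
  intro i hi
  obtain ⟨h1, h2⟩ := hout1 i hi w (hbG i hi)
  have hc : 2*k+1 ≤ ((L i).filter (fun s => recv2 i s = some w)).card := by
    calc 2*k+1 ≤ G.card := hGcard
      _ ≤ _ := Finset.card_le_card ?_
    intro s hs
    rw [Finset.mem_filter]
    refine ⟨hGL i hi hs, ?_⟩
    rw [hrecv2 i hi s (hGH hs), if_pos (hself s hs), hbG s (hGH hs)]
  exact Prod.ext h1 (h2.2 hc)
end

section
/- In the unauthenticated graded consensus with core set protocol, if some honest process returns (v, 1), then every honest process returns value v (with grade 0 or 1) (coherence). -/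
lemma gc_inter_core {α : Type*} [DecidableEq α] {Lset G F : Finset α} {k : ℕ}
    (hF : F ⊆ Lset) (hG : G ⊆ Lset) (hL : Lset.card = 3 * k + 1) :
    F.card + G.card ≤ 3 * k + 1 + (F ∩ G).card := by
  have h1 := Finset.card_union_add_card_inter F G
  have h2 : (F ∪ G).card ≤ 3 * k + 1 := hL ▸ Finset.card_le_card (Finset.union_subset hF hG)
  omega

/-- Coherence of graded-consensus-with-core-set: each honest process `i`
has input `v i`, a listening set `L i` of size `3k+1` containing a common core `G ⊆ H` of at
least `2k+1` honest processes.  Round 1: honest `s` with `s ∈ L s` broadcasts `v s`; `b i` is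
the value received at least `2k+1` times from `L i` (else `none`).  Round 2: honest `s` with
`s ∈ L s` and `b s ≠ none` broadcasts `b s`; `out i` follows the algorithm's return rules.
If some honest process returns `(w, true)` (grade 1), then every honest process returns the
value `w` (with grade 0 or 1). -/
theorem gc_core_set_coherence {V : Type} [DecidableEq V] {n k : ℕ}
    (H G : Finset (Fin n)) (L : Fin n → Finset (Fin n)) (v : Fin n → V)
    (hL : ∀ i ∈ H, (L i).card = 3 * k + 1)
    (hGH : G ⊆ H) (hGcard : 2 * k + 1 ≤ G.card)
    (hGL : ∀ i ∈ H, G ⊆ L i)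
    -- round 1
    (recv1 : Fin n → Fin n → Option V)
    (hrecv1 : ∀ i ∈ H, ∀ s ∈ H, recv1 i s = if s ∈ L s then some (v s) else none)
    (b : Fin n → Option V)
    (hb : ∀ i ∈ H, ∀ x : V,
      (b i = some x ↔ 2 * k + 1 ≤ ((L i).filter (fun s => recv1 i s = some x)).card))
    -- round 2
    (recv2 : Fin n → Fin n → Option V)
    (hrecv2 : ∀ i ∈ H, ∀ s ∈ H, recv2 i s = if s ∈ L s then b s else none)
    -- outputs, following the return rules of the algorithm
    (out : Fin n → V × Bool)
    (hout1 : ∀ i ∈ H, ∀ x : V, b i = some x →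
      (out i).1 = x ∧
      ((out i).2 = true ↔ 2 * k + 1 ≤ ((L i).filter (fun s => recv2 i s = some x)).card))
    (hout2 : ∀ i ∈ H, b i = none →
      (out i).2 = false ∧
      ((∃ x : V, k + 1 ≤ ((L i).filter (fun s => recv2 i s = some x)).card) →
        k + 1 ≤ ((L i).filter (fun s => recv2 i s = some ((out i).1))).card) ∧
      ((¬ ∃ x : V, k + 1 ≤ ((L i).filter (fun s => recv2 i s = some x)).card) →
        (out i).1 = v i))
    (w : V) (i₀ : Fin n) (hi₀ : i₀ ∈ H) (hw : out i₀ = (w, true)) :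
    ∀ i ∈ H, (out i).1 = w := by
  classical
  set A : V → Finset (Fin n) := fun x => G.filter (fun s => s ∈ L s ∧ v s = x) with hA
  -- Claim: if an honest i has b i = some x, then |A x| ≥ |G| - k.
  have claimA : ∀ i ∈ H, ∀ x : V, b i = some x → G.card ≤ k + (A x).card := by
    intro i hi x hbix
    have hcount := (hb i hi x).1 hbix
    set F := (L i).filter (fun s => recv1 i s = some x) with hF
    have hsub : F ∩ G ⊆ A x := by
      intro s hs
      rw [Finset.mem_inter] at hs
      obtain ⟨hsF, hsG⟩ := hs
      rw [hF, Finset.mem_filter] at hsF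
      have hsH : s ∈ H := hGH hsG
      have := hrecv1 i hi s hsH
      rw [this] at hsF
      rw [hA, Finset.mem_filter]
      by_cases hss : s ∈ L s
      · simp [hss] at hsF
        exact ⟨hsG, hss, hsF.2⟩
      · simp [hss] at hsF
    have hic := gc_inter_core (F := F) (hF ▸ Finset.filter_subset _ _) (hGL i hi) (hL i hi)
    have := Finset.card_le_card hsub
    omega
  -- Uniqueness of non-⊥ b-values among honest processes.
  have claimU : ∀ i ∈ H, ∀ j ∈ H, ∀ x y : V, b i = some x → b j = some y → x = y := by
    intro i hi j hj x y hx hy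
    by_contra hne
    have hAx := claimA i hi x hx
    have hAy := claimA j hj y hy
    have hdisj : Disjoint (A x) (A y) := by
      rw [Finset.disjoint_left]
      intro s hsx hsy
      rw [hA, Finset.mem_filter] at hsx hsy
      exact hne (hsx.2.2 ▸ hsy.2.2 ▸ rfl)
    have hsubG : A x ∪ A y ⊆ G := by
      intro s hs
      rcases Finset.mem_union.1 hs with h | h <;>
        exact (Finset.mem_filter.1 h).1
    have := Finset.card_le_card hsubG
    rw [Finset.card_union_of_disjoint hdisj] at this
    omega
  -- b i₀ = some w
  have hbw : b i₀ = some w := by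
    cases hbi : b i₀ with
    | none =>
      have := (hout2 i₀ hi₀ hbi).1
      rw [hw] at this; simp at this
    | some x =>
      have h1 := (hout1 i₀ hi₀ x hbi).1
      rw [hw] at h1
      simp at h1
      rw [h1]
  -- grade-1 condition at i₀
  have hgrade : 2 * k + 1 ≤ ((L i₀).filter (fun s => recv2 i₀ s = some w)).card := by
    have h2 := (hout1 i₀ hi₀ w hbw).2
    have : (out i₀).2 = true := by rw [hw]
    exact h2.1 this
  -- the set B of core processes that broadcast w in round 2
  set B : Finset (Fin n) := G.filter (fun s => s ∈ L s ∧ b s = some w) with hB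
  have hBcard : G.card ≤ k + B.card := by
    set F := (L i₀).filter (fun s => recv2 i₀ s = some w) with hF
    have hsub : F ∩ G ⊆ B := by
      intro s hs
      rw [Finset.mem_inter] at hs
      obtain ⟨hsF, hsG⟩ := hs
      rw [hF, Finset.mem_filter] at hsF
      have hsH : s ∈ H := hGH hsG
      have := hrecv2 i₀ hi₀ s hsH
      rw [this] at hsF
      rw [hB, Finset.mem_filter]
      by_cases hss : s ∈ L s
      · simp [hss] at hsF
        exact ⟨hsG, hss, hsF.2⟩
      · simp [hss] at hsF
    have hic := gc_inter_core (F := F) (hF ▸ Finset.filter_subset _ _) (hGL i₀ hi₀) (hL i₀ hi₀)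
    have := Finset.card_le_card hsub
    omega
  obtain ⟨s₀, hs₀⟩ : B.Nonempty := Finset.card_pos.1 (by omega)
  rw [hB, Finset.mem_filter] at hs₀
  obtain ⟨hs₀G, hs₀L, hs₀b⟩ := hs₀
  have hs₀H : s₀ ∈ H := hGH hs₀G
  -- main goal
  intro i hi
  cases hbi : b i with
  | some x =>
    have hxw : x = w := claimU i hi s₀ hs₀H x w hbi hs₀b
    rw [(hout1 i hi x hbi).1, hxw]
  | none =>
    obtain ⟨_, hmid, _⟩ := hout2 i hi hbi
    -- B witnesses ≥ k+1 processes sending w to i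
    have hBsub : B ⊆ (L i).filter (fun s => recv2 i s = some w) := by
      intro s hs
      rw [hB, Finset.mem_filter] at hs
      obtain ⟨hsG, hsL, hsb⟩ := hs
      have hsH : s ∈ H := hGH hsG
      rw [Finset.mem_filter]
      refine ⟨hGL i hi hsG, ?_⟩
      rw [hrecv2 i hi s hsH, if_pos hsL, hsb]
    have hwcount : k + 1 ≤ ((L i).filter (fun s => recv2 i s = some w)).card := by
      have := Finset.card_le_card hBsub
      omega
    have hycount := hmid ⟨w, hwcount⟩
    set y := (out i).1 with hy
    -- find a core process that sent y
    set F := (L i).filter (fun s => recv2 i s = some y) with hF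
    have hic := gc_inter_core (F := F) (hF ▸ Finset.filter_subset _ _) (hGL i hi) (hL i hi)
    obtain ⟨t, ht⟩ : (F ∩ G).Nonempty := Finset.card_pos.1 (by omega)
    rw [Finset.mem_inter] at ht
    obtain ⟨htF, htG⟩ := ht
    rw [hF, Finset.mem_filter] at htF
    have htH : t ∈ H := hGH htG
    have hr := hrecv2 i hi t htH
    rw [hr] at htF
    by_cases htt : t ∈ L t
    · rw [if_pos htt] at htF
      exact claimU t htH s₀ hs₀H y w htF.2 hs₀b
    · rw [if_neg htt] at htF
      exact absurd htF.2 (by simp)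
end

section
/- In the conciliation-with-core-set protocol's reachability graph, if T is the set of honest processes p_j with j ∈ L_j, every honest process's listening set consists only of honest processes, and there is a directed path in the graph (T_i, E_i) from vertex y to a vertex j ∈ T, then y ∈ T. -/
/-- In the conciliation-with-core-set reachability graph, let
`T = {i ∈ H : i ∈ L i}` be the honest broadcasters, where every honest listening set consists
only of honest processes.  `Ti` is the set of senders a fixed honest process heard from
(`T ⊆ Ti`, and the honest members of `Ti` are exactly `T`); `Lc z` is the listening set claimed
in `z`'s message, truthful for honest `z`.  If there is a directed path from `y` to some
`j ∈ T` along the edges `(a,b)` with `a, b ∈ Ti` and `a ∈ Lc b`, then `y ∈ T`. -/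
theorem conciliation_path_lemma {n : ℕ}
    (H F : Finset (Fin n))
    (hpart : ∀ i, i ∈ H ∨ i ∈ F) (hdisj : Disjoint H F)
    (L : Fin n → Finset (Fin n))
    (hLH : ∀ i ∈ H, L i ⊆ H)
    (T : Finset (Fin n)) (hT : T = H.filter (fun i => i ∈ L i))
    (Ti : Finset (Fin n)) (hTTi : T ⊆ Ti) (hTiH : ∀ y ∈ Ti, y ∈ H → y ∈ T)
    (Lc : Fin n → Finset (Fin n)) (hLc : ∀ z ∈ H, Lc z = L z)
    (y j : Fin n) (hj : j ∈ T)
    (hpath : Relation.ReflTransGen (fun a b => a ∈ Ti ∧ b ∈ Ti ∧ a ∈ Lc b) y j) :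
    y ∈ T := by
  induction hpath using Relation.ReflTransGen.head_induction_on with
  | refl => exact hj
  | head h hp ih =>
    rename_i a b
    obtain ⟨haTi, hbTi, haLc⟩ := h
    have hbH : b ∈ H := by rw [hT] at ih; exact (Finset.mem_filter.mp ih).1
    have : a ∈ L b := by rwa [hLc b hbH] at haLc
    exact hTiH a haTi (hLH b hbH this)
end

section
/- The conciliation-with-core-set protocol satisfies agreement: if all honest processes' listening sets contain only honest processes and share a common honest core G of size at least 2k+1, then all honest processes return the same value. -/
open Classical in
/-- Agreement of conciliation-with-core-set: each honest process `i` has input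
`v i` and a listening set `L i ⊆ H` of size `3k+1`; all honest listening sets share a common
honest core `G` of size at least `2k+1`.  The honest broadcasters are `T = {i ∈ H : i ∈ L i}`;
`Ti i` is the set of senders honest `i` heard from (`T ⊆ Ti i`, honest members of `Ti i` are in
`T`); `vc i s` and `Lc i s` are the value and listening set claimed by sender `s` to `i`
(truthful for honest `s`).  `m i z` is the minimum of the claimed values `vc i y` over
broadcasters `y` (with `y ∈ Lc i y`) having a path to `z` in the graph on `Ti i` with edges
`(a,b)` for `a ∈ Lc i b`; `out i` is a most frequently occurring value among
`{m i z : z ∈ Ti i ∩ L i}`.  Then all honest processes return the same value. -/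
theorem conciliation_agreement {V : Type} [LinearOrder V] {n k : ℕ}
    (H G : Finset (Fin n)) (L : Fin n → Finset (Fin n)) (v : Fin n → V)
    (hL : ∀ i ∈ H, (L i).card = 3 * k + 1)
    (hLH : ∀ i ∈ H, L i ⊆ H)
    (hGH : G ⊆ H) (hGcard : 2 * k + 1 ≤ G.card)
    (hGL : ∀ i ∈ H, G ⊆ L i)
    (T : Finset (Fin n)) (hT : T = H.filter (fun i => i ∈ L i))
    (Ti : Fin n → Finset (Fin n))
    (hTTi : ∀ i ∈ H, T ⊆ Ti i)
    (hTiH : ∀ i ∈ H, ∀ y ∈ Ti i, y ∈ H → y ∈ T)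
    (vc : Fin n → Fin n → V) (Lc : Fin n → Fin n → Finset (Fin n))
    (hvc : ∀ i ∈ H, ∀ s ∈ H, vc i s = v s)
    (hLc : ∀ i ∈ H, ∀ s ∈ H, Lc i s = L s)
    (m : Fin n → Fin n → WithTop V)
    (hm : ∀ i ∈ H, ∀ z : Fin n, m i z =
      (((Ti i).filter (fun y => y ∈ Lc i y ∧
          Relation.ReflTransGen (fun a b => a ∈ Ti i ∧ b ∈ Ti i ∧ a ∈ Lc i b) y z)).image
        (fun y => vc i y)).min)
    (out : Fin n → WithTop V)
    (hout : ∀ i ∈ H, ∃ z ∈ Ti i ∩ L i, out i = m i z)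
    (hplur : ∀ i ∈ H, ∀ w : WithTop V,
      ((Ti i ∩ L i).filter (fun z => m i z = w)).card ≤
        ((Ti i ∩ L i).filter (fun z => m i z = out i)).card) :
    ∀ i ∈ H, ∀ i' ∈ H, out i = out i' := by
  classical
  -- honest edge relation
  set E : Fin n → Fin n → Prop := fun a b => a ∈ T ∧ b ∈ T ∧ a ∈ L b with hE
  have hTH : T ⊆ H := by
    rw [hT]; exact Finset.filter_subset _ _
  have hGT : G ⊆ T := by
    intro j hj
    rw [hT]; exact Finset.mem_filter.mpr ⟨hGH hj, hGL j (hGH hj) hj⟩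
  -- paths to honest vertices only use honest vertices
  have key : ∀ i ∈ H, ∀ y z : Fin n,
      Relation.ReflTransGen (fun a b => a ∈ Ti i ∧ b ∈ Ti i ∧ a ∈ Lc i b) y z →
      z ∈ H → y ∈ H ∧ Relation.ReflTransGen E y z := by
    intro i hi y z hpath
    induction hpath with
    | refl => intro hz; exact ⟨hz, Relation.ReflTransGen.refl⟩
    | @tail b c hyb hbc ih =>
      intro hc
      have hbH : b ∈ H := by
        have : Lc i c = L c := hLc i hi c hc
        exact hLH c hc (this ▸ hbc.2.2)
      obtain ⟨hyH, hRT⟩ := ih hbH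
      refine ⟨hyH, hRT.tail ?_⟩
      refine ⟨hTiH i hi b hbc.1 hbH, hTiH i hi c hbc.2.1 hc, ?_⟩
      have : Lc i c = L c := hLc i hi c hc
      exact this ▸ hbc.2.2
  -- honest paths lift to any honest process's graph
  have lift : ∀ i ∈ H, ∀ y z : Fin n, Relation.ReflTransGen E y z →
      Relation.ReflTransGen (fun a b => a ∈ Ti i ∧ b ∈ Ti i ∧ a ∈ Lc i b) y z := by
    intro i hi y z h
    refine Relation.ReflTransGen.mono ?_ y z h
    intro a b ⟨haT, hbT, haL⟩
    refine ⟨hTTi i hi haT, hTTi i hi hbT, ?_⟩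
    rw [hLc i hi b (hTH hbT)]; exact haL
  -- for honest i and honest z, the reachable-broadcaster set is canonical
  have hset : ∀ i ∈ H, ∀ z ∈ H,
      ((Ti i).filter (fun y => y ∈ Lc i y ∧
          Relation.ReflTransGen (fun a b => a ∈ Ti i ∧ b ∈ Ti i ∧ a ∈ Lc i b) y z))
      = T.filter (fun y => Relation.ReflTransGen E y z) := by
    intro i hi z hz
    ext y
    simp only [Finset.mem_filter]
    constructor
    · rintro ⟨hyTi, hyLc, hpath⟩
      obtain ⟨hyH, hRT⟩ := key i hi y z hpath hz
      exact ⟨hTiH i hi y hyTi hyH, hRT⟩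
    · rintro ⟨hyT, hRT⟩
      have hyH : y ∈ H := hTH hyT
      have hyL : y ∈ L y := by
        rw [hT] at hyT; exact (Finset.mem_filter.mp hyT).2
      exact ⟨hTTi i hi hyT, by rw [hLc i hi y hyH]; exact hyL,
        lift i hi y z hRT⟩
  -- m i z is canonical for honest i and honest z
  have hmcanon : ∀ i ∈ H, ∀ z ∈ H, m i z =
      ((T.filter (fun y => Relation.ReflTransGen E y z)).image v).min := by
    intro i hi z hz
    rw [hm i hi z, hset i hi z hz]
    congr 1
    apply Finset.image_congr
    intro y hy
    simp only [Finset.coe_filter, Set.mem_setOf_eq] at hy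
    exact hvc i hi y (hTH hy.1)
  -- for j, j' in G, the reachable sets coincide
  have hGeq : ∀ j ∈ G, ∀ j' ∈ G,
      T.filter (fun y => Relation.ReflTransGen E y j)
      = T.filter (fun y => Relation.ReflTransGen E y j') := by
    have step : ∀ j ∈ G, ∀ j' ∈ G, ∀ y,
        Relation.ReflTransGen E y j → Relation.ReflTransGen E y j' := by
      intro j hj j' hj' y h
      exact h.tail ⟨hGT hj, hGT hj', hGL j' (hGH hj') hj⟩
    intro j hj j' hj'
    ext y
    simp only [Finset.mem_filter]
    exact ⟨fun ⟨h1, h2⟩ => ⟨h1, step j hj j' hj' y h2⟩,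
      fun ⟨h1, h2⟩ => ⟨h1, step j' hj' j hj y h2⟩⟩
  -- pick j₀ ∈ G and define the common value
  obtain ⟨j₀, hj₀⟩ := Finset.card_pos.mp (lt_of_lt_of_le (Nat.succ_pos _) hGcard)
  set c : WithTop V := ((T.filter (fun y => Relation.ReflTransGen E y j₀)).image v).min with hc
  have hmj : ∀ i ∈ H, ∀ j ∈ G, m i j = c := by
    intro i hi j hj
    rw [hmcanon i hi j (hGH hj), hGeq j hj j₀ hj₀]
  -- each honest process outputs c
  have main : ∀ i ∈ H, out i = c := by
    intro i hi
    by_contra hne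
    have hGsub : G ⊆ (Ti i ∩ L i).filter (fun z => m i z = c) := by
      intro j hj
      refine Finset.mem_filter.mpr ⟨Finset.mem_inter.mpr
        ⟨hTTi i hi (hGT hj), hGL i hi hj⟩, hmj i hi j hj⟩
    have hcard1 : 2 * k + 1 ≤ ((Ti i ∩ L i).filter (fun z => m i z = c)).card :=
      le_trans hGcard (Finset.card_le_card hGsub)
    have hcard2 : 2 * k + 1 ≤ ((Ti i ∩ L i).filter (fun z => m i z = out i)).card :=
      le_trans hcard1 (hplur i hi c)
    have hdisj : Disjoint ((Ti i ∩ L i).filter (fun z => m i z = c))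
        ((Ti i ∩ L i).filter (fun z => m i z = out i)) := by
      apply Finset.disjoint_filter_filter'
      intro p hp1 hp2 z hz
      exact hne ((hp2 z hz).symm.trans (hp1 z hz))
    have hunion : ((Ti i ∩ L i).filter (fun z => m i z = c)).card +
        ((Ti i ∩ L i).filter (fun z => m i z = out i)).card ≤ (L i).card := by
      rw [← Finset.card_union_of_disjoint hdisj]
      apply Finset.card_le_card
      intro z hz
      rcases Finset.mem_union.mp hz with h | h
      · exact (Finset.mem_inter.mp (Finset.mem_filter.mp h).1).2
      · exact (Finset.mem_inter.mp (Finset.mem_filter.mp h).1).2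
    rw [hL i hi] at hunion
    omega
  intro i hi i' hi'
  rw [main i hi, main i' hi']
end

section
/- In the unauthenticated Byzantine agreement with classification, a faulty process p_j can belong to the listening set L_i of some honest process p_i in at most two (consecutive) of the 2k+1 phases, where in phase φ, L_i consists of the identifiers in positions (3k+1)(φ−1)+1 through (3k+1)φ of π(c_i), assuming (3k+1)(2k+1) ≤ n − t − k and at most k misclassified processes. -/
open Classical in
/-- The set of phases `φ ∈ {1, …, 2k+1}` during which process `j` belongs to the listening set
`L i` of some honest process `i`, i.e. the position of `j` in `π(c i)` lies in the range
`(3k+1)(φ−1)+1 … (3k+1)φ`. -/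
noncomputable def phasesAppearing {n : ℕ} (k : ℕ) (H : Finset (Fin n))
    (c : Fin n → Fin n → Bool) (j : Fin n) : Finset ℕ :=
  (Finset.Icc 1 (2 * k + 1)).filter (fun φ => ∃ i ∈ H,
    (3 * k + 1) * (φ - 1) < piPos (c i) j ∧ piPos (c i) j ≤ (3 * k + 1) * φ)

open Classical in
/-- In the unauthenticated Byzantine agreement with classification, assuming
`(3k+1)(2k+1) ≤ n − t − k` and at most `k` processes misclassified by some honest process,
a faulty process `j` can belong to the listening set of some honest process in at most two
consecutive of the `2k+1` phases. -/
theorem faulty_in_at_most_two_phases {n t k f : ℕ}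
    (H F : Finset (Fin n))
    (hpart : ∀ i, i ∈ H ∨ i ∈ F) (hdisj : Disjoint H F)
    (hF : F.card = f) (hft : f ≤ t)
    (c : Fin n → Fin n → Bool)
    (hmis : (Finset.univ.filter (fun j : Fin n => ∃ i ∈ H, c i j ≠ decide (j ∈ H))).card ≤ k)
    (hsize : (3 * k + 1) * (2 * k + 1) + t + k ≤ n)
    (j : Fin n) (hj : j ∈ F) :
    (phasesAppearing k H c j).card ≤ 2 ∧
      ∀ φ ∈ phasesAppearing k H c j, ∀ φ' ∈ phasesAppearing k H c j,
        φ ≤ φ' → φ' ≤ φ + 1 := by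
  classical
  set M := Finset.univ.filter (fun j : Fin n => ∃ i ∈ H, c i j ≠ decide (j ∈ H)) with hM
  have hjH : j ∉ H := fun h => (Finset.disjoint_left.mp hdisj h hj).elim
  have hHcard : n ≤ H.card + f := by
    have hsub : (Finset.univ : Finset (Fin n)) ⊆ H ∪ F := fun i _ =>
      Finset.mem_union.mpr (hpart i)
    calc n = (Finset.univ : Finset (Fin n)).card := (Finset.card_fin n).symm
      _ ≤ (H ∪ F).card := Finset.card_le_card hsub
      _ ≤ H.card + F.card := Finset.card_union_le _ _
      _ = H.card + f := by rw [hF]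
  -- Lemma A: any honest process whose ordering places `j` within the phase range misclassifies `j`
  have lemA : ∀ i ∈ H, piPos (c i) j ≤ (3 * k + 1) * (2 * k + 1) → c i j = true := by
    intro i hi hle
    by_contra hfalse
    have hcij : c i j = false := by
      cases hc : c i j
      · rfl
      · exact absurd hc hfalse
    set B := Finset.univ.filter (fun x : Fin n => j < x ∧ c i x) with hB
    have hpi : piPos (c i) j = (j : ℕ) + 1 + B.card := by
      simp [piPos, hcij, hB]
    set T := Finset.univ.filter (fun x : Fin n => c i x = true) with hT
    have hTsub : H \ M ⊆ T := by
      intro x hx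
      obtain ⟨hxH, hxM⟩ := Finset.mem_sdiff.mp hx
      simp only [hM, Finset.mem_filter, Finset.mem_univ, true_and, not_exists] at hxM
      push_neg at hxM
      have := hxM i hi
      simp only [hT, Finset.mem_filter, Finset.mem_univ, true_and]
      rw [this]
      simp [hxH]
    have hHT : H.card ≤ T.card + k := by
      have h1 : H ⊆ (H \ M) ∪ M := by
        intro x hx
        by_cases hxM : x ∈ M
        · exact Finset.mem_union_right _ hxM
        · exact Finset.mem_union_left _ (Finset.mem_sdiff.mpr ⟨hx, hxM⟩)
      calc H.card ≤ ((H \ M) ∪ M).card := Finset.card_le_card h1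
        _ ≤ (H \ M).card + M.card := Finset.card_union_le _ _
        _ ≤ T.card + k := Nat.add_le_add (Finset.card_le_card hTsub) hmis
    have hsplit : (T.filter (fun x => x ≤ j)).card + (T.filter (fun x => ¬ x ≤ j)).card
        = T.card := Finset.card_filter_add_card_filter_not _
    have hA : (T.filter (fun x => x ≤ j)).card ≤ (j : ℕ) := by
      have hsub : T.filter (fun x => x ≤ j) ⊆ Finset.Iio j := by
        intro x hx
        simp only [hT, Finset.mem_filter, Finset.mem_univ, true_and] at hx
        have hxj : x ≠ j := by
          intro h; rw [h] at hx; rw [hcij] at hx; exact Bool.false_ne_true hx.1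
        exact Finset.mem_Iio.mpr (lt_of_le_of_ne hx.2 hxj)
      calc (T.filter (fun x => x ≤ j)).card ≤ (Finset.Iio j).card :=
            Finset.card_le_card hsub
        _ = (j : ℕ) := Fin.card_Iio j
    have hBeq : T.filter (fun x => ¬ x ≤ j) = B := by
      ext x
      simp only [hT, hB, Finset.mem_filter, Finset.mem_univ, true_and, not_le]
      tauto
    have hTle : T.card ≤ (j : ℕ) + B.card := by
      rw [← hsplit, hBeq]
      exact Nat.add_le_add_right hA _
    linarith [hle, hpi, hHT, hTle, hHcard, hft, hsize]
  -- Lemma B: positions of `j` in two honest orderings that both misclassify `j` differ by ≤ k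
  have lemB : ∀ i ∈ H, ∀ i' ∈ H, c i j = true → c i' j = true →
      piPos (c i) j ≤ piPos (c i') j + k := by
    intro i hi i' hi' h1 h2
    have e1 : piPos (c i) j = (Finset.univ.filter (fun x : Fin n => x ≤ j ∧ c i x)).card := by
      simp [piPos, h1]
    have e2 : piPos (c i') j = (Finset.univ.filter (fun x : Fin n => x ≤ j ∧ c i' x)).card := by
      simp [piPos, h2]
    rw [e1, e2]
    have hsub : Finset.univ.filter (fun x : Fin n => x ≤ j ∧ c i x)
        ⊆ (Finset.univ.filter (fun x : Fin n => x ≤ j ∧ c i' x)) ∪ M := by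
      intro x hx
      simp only [Finset.mem_filter, Finset.mem_univ, true_and] at hx
      by_cases hxM : x ∈ M
      · exact Finset.mem_union_right _ hxM
      · refine Finset.mem_union_left _ ?_
        simp only [hM, Finset.mem_filter, Finset.mem_univ, true_and, not_exists] at hxM
        push_neg at hxM
        have hx1 := hxM i hi
        have hx2 := hxM i' hi'
        simp only [Finset.mem_filter, Finset.mem_univ, true_and]
        refine ⟨hx.1, ?_⟩
        rw [hx2, ← hx1]
        exact hx.2
    calc (Finset.univ.filter (fun x : Fin n => x ≤ j ∧ c i x)).card
        ≤ ((Finset.univ.filter (fun x : Fin n => x ≤ j ∧ c i' x)) ∪ M).card :=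
          Finset.card_le_card hsub
      _ ≤ (Finset.univ.filter (fun x : Fin n => x ≤ j ∧ c i' x)).card + M.card :=
          Finset.card_union_le _ _
      _ ≤ (Finset.univ.filter (fun x : Fin n => x ≤ j ∧ c i' x)).card + k :=
          Nat.add_le_add_left hmis _
  -- Consecutiveness
  have key : ∀ φ ∈ phasesAppearing k H c j, ∀ φ' ∈ phasesAppearing k H c j,
      φ ≤ φ' → φ' ≤ φ + 1 := by
    intro φ hφ φ' hφ'2 hle
    simp only [phasesAppearing, Finset.mem_filter, Finset.mem_Icc] at hφ hφ'2
    obtain ⟨⟨hφ1, hφ2⟩, i, hi, hlo, hhi⟩ := hφ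
    obtain ⟨⟨hφ'1, hφ'2'⟩, i', hi', hlo', hhi'⟩ := hφ'2
    have hmax : piPos (c i) j ≤ (3 * k + 1) * (2 * k + 1) :=
      le_trans hhi (Nat.mul_le_mul_left _ hφ2)
    have hmax' : piPos (c i') j ≤ (3 * k + 1) * (2 * k + 1) :=
      le_trans hhi' (Nat.mul_le_mul_left _ hφ'2')
    have ht1 : c i j = true := lemA i hi hmax
    have ht2 : c i' j = true := lemA i' hi' hmax'
    have hBB : piPos (c i') j ≤ piPos (c i) j + k := lemB i' hi' i hi ht2 ht1
    by_contra hgt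
    push_neg at hgt
    have hmm : (3 * k + 1) * (φ + 1) ≤ (3 * k + 1) * (φ' - 1) :=
      Nat.mul_le_mul_left _ (by omega)
    have hexp : (3 * k + 1) * (φ + 1) = (3 * k + 1) * φ + (3 * k + 1) := by ring
    linarith [hlo', hhi, hBB, hmm, hexp]
  refine ⟨?_, key⟩
  rcases (phasesAppearing k H c j).eq_empty_or_nonempty with he | hne
  · simp [he]
  · set φ0 := (phasesAppearing k H c j).min' hne with hφ0
    have hsub : phasesAppearing k H c j ⊆ Finset.Icc φ0 (φ0 + 1) := by
      intro φ hφ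
      refine Finset.mem_Icc.mpr ⟨Finset.min'_le _ _ hφ, ?_⟩
      exact key φ0 (Finset.min'_mem _ hne) φ hφ (Finset.min'_le _ _ hφ)
    calc (phasesAppearing k H c j).card ≤ (Finset.Icc φ0 (φ0 + 1)).card :=
          Finset.card_le_card hsub
      _ = 2 := by rw [Nat.card_Icc]; omega
end

section
/- In the unauthenticated Byzantine agreement with classification running 2k+1 phases with at most k misclassified faulty processes and each faulty process appearing in honest listening sets in at most two phases, there exists a phase φ ∈ {1,…,2k+1} in which L_i ⊆ H for every honest process p_i. -/
open Classical in
/-- With `2k+1` phases, at most `k` misclassified faulty processes, every faulty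
process appearing in an honest listening set being misclassified, and each faulty process
appearing in honest listening sets in at most two phases, there is a phase `φ ∈ {1,…,2k+1}`
in which the listening set of every honest process contains only honest processes. -/
theorem exists_all_honest_phase {n t k : ℕ}
    (H F : Finset (Fin n))
    (hpart : ∀ i, i ∈ H ∨ i ∈ F) (hdisj : Disjoint H F)
    (hFt : F.card ≤ t)
    (c : Fin n → Fin n → Bool)
    (hsize : (3 * k + 1) * (2 * k + 1) + t + k ≤ n)
    (MF : Finset (Fin n)) (hMF : MF = F.filter (fun j => ∃ i ∈ H, c i j = true))
    (hMFcard : MF.card ≤ k)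
    (happear : ∀ j ∈ F, (phasesAppearing k H c j).Nonempty → j ∈ MF)
    (htwo : ∀ j ∈ F, (phasesAppearing k H c j).card ≤ 2) :
    ∃ φ ∈ Finset.Icc 1 (2 * k + 1), ∀ i ∈ H, ∀ j : Fin n,
      ((3 * k + 1) * (φ - 1) < piPos (c i) j ∧ piPos (c i) j ≤ (3 * k + 1) * φ) →
        j ∈ H := by

  classical
  set S : Finset ℕ := MF.biUnion (phasesAppearing k H c) with hS
  have hMFsubF : MF ⊆ F := by
    rw [hMF]; exact Finset.filter_subset _ _
  have hScard : S.card ≤ 2 * k := by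
    calc S.card ≤ ∑ j ∈ MF, (phasesAppearing k H c j).card :=
          Finset.card_biUnion_le
      _ ≤ ∑ _j ∈ MF, 2 := Finset.sum_le_sum (fun j hj => htwo j (hMFsubF hj))
      _ = MF.card * 2 := by simp [Finset.sum_const, Nat.smul_one_eq_cast, mul_comm]
      _ ≤ k * 2 := by omega
      _ = 2 * k := by ring
  have hIcc : (Finset.Icc 1 (2 * k + 1)).card = 2 * k + 1 := by
    rw [Nat.card_Icc]; omega
  have hne : (Finset.Icc 1 (2 * k + 1) \ S).Nonempty := by
    rw [← Finset.card_pos]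
    have := Finset.le_card_sdiff S (Finset.Icc 1 (2 * k + 1))
    have hle : (Finset.Icc 1 (2 * k + 1)).card - S.card
        ≤ (Finset.Icc 1 (2 * k + 1) \ S).card := Finset.le_card_sdiff _ _
    omega
  obtain ⟨φ, hφ⟩ := hne
  rw [Finset.mem_sdiff] at hφ
  refine ⟨φ, hφ.1, fun i hi j hj => ?_⟩
  by_contra hjH
  have hjF : j ∈ F := (hpart j).resolve_left hjH
  have hφapp : φ ∈ phasesAppearing k H c j := by
    rw [phasesAppearing, Finset.mem_filter]
    exact ⟨hφ.1, i, hi, hj⟩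
  have hjMF : j ∈ MF := happear j hjF ⟨φ, hφapp⟩
  exact hφ.2 (Finset.mem_biUnion.mpr ⟨j, hjMF, hφapp⟩)
end

section
/- In the authenticated Byzantine agreement with classification, if 2k+1 ≤ n − t − k and each honest process p_i sends committee votes to the first 2k+1 processes in π(c_i), with a process needing t+1 votes (out of n ≥ 2t+1 processes) to obtain a committee certificate, then the committee C satisfies: |C ∩ F| ≤ k, |C ∩ H| ≥ k+1, and |C| ≤ 3k+1. -/
/-- The "rank" map `j ↦ |{j' ∈ G : j' ≤ j}|` is injective on `G`. -/
lemma rank_injOn {n : ℕ} (G : Finset (Fin n)) :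
    Set.InjOn (fun j => (G.filter (· ≤ j)).card) G := by
  have key : ∀ a b : Fin n, a ∈ G → b ∈ G → a < b →
      (G.filter (· ≤ a)).card < (G.filter (· ≤ b)).card := by
    intro a b _ hb hab
    apply Finset.card_lt_card
    have hsub : G.filter (· ≤ a) ⊆ G.filter (· ≤ b) := by
      intro x hx
      obtain ⟨hxG, hxa⟩ := Finset.mem_filter.1 hx
      exact Finset.mem_filter.2 ⟨hxG, le_trans hxa hab.le⟩
    rw [Finset.ssubset_iff_of_subset hsub]
    exact ⟨b, Finset.mem_filter.2 ⟨hb, le_refl b⟩,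
      fun hmem => absurd (Finset.mem_filter.1 hmem).2 (not_le.2 hab)⟩
  intro a ha b hb hab
  by_contra hne
  rcases lt_or_gt_of_ne hne with h | h
  · exact absurd hab (Nat.ne_of_lt (key a b ha hb h))
  · exact absurd hab.symm (Nat.ne_of_lt (key b a hb ha h))

/-- There are at most `m` elements of `G` of rank at most `m`. -/
lemma rank_count_le {n m : ℕ} (G : Finset (Fin n)) :
    (G.filter (fun j => (G.filter (· ≤ j)).card ≤ m)).card ≤ m := by
  have := Finset.card_le_card_of_injOn (f := fun j => (G.filter (· ≤ j)).card)
    (s := G.filter (fun j => (G.filter (· ≤ j)).card ≤ m)) (t := Finset.Icc 1 m)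
    (by
      intro j hj
      obtain ⟨hjG, hjm⟩ := Finset.mem_filter.1 hj
      refine Finset.mem_Icc.2 ⟨?_, hjm⟩
      exact Finset.card_pos.2 ⟨j, Finset.mem_filter.2 ⟨hjG, le_refl j⟩⟩)
    (fun a ha b hb hab =>
      rank_injOn G (Finset.mem_of_mem_filter a ha) (Finset.mem_of_mem_filter b hb) hab)
  simpa [Nat.card_Icc] using this

/-- If `G` has at least `m` elements, there is a subset of size `m` all of whose
elements have rank at most `m` in `G`. -/
lemma rank_count_ge {n m : ℕ} (G : Finset (Fin n)) (hm : m ≤ G.card) :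
    ∃ S ⊆ G, S.card = m ∧ ∀ j ∈ S, (G.filter (· ≤ j)).card ≤ m := by
  classical
  set e := G.orderEmbOfFin rfl with he
  refine ⟨(Finset.univ : Finset (Fin m)).image (fun l => e (Fin.castLE hm l)), ?_, ?_, ?_⟩
  · intro x hx
    obtain ⟨l, _, rfl⟩ := Finset.mem_image.1 hx
    exact Finset.orderEmbOfFin_mem G rfl _
  · rw [Finset.card_image_of_injective _
      (fun a b hab => Fin.castLE_injective hm (e.injective hab))]
    simp
  · intro j hj
    obtain ⟨l, _, rfl⟩ := Finset.mem_image.1 hj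
    set l' : Fin G.card := Fin.castLE hm l with hl'
    have hsub : G.filter (· ≤ e l') ⊆ (Finset.Iic l').image e := by
      intro x hx
      obtain ⟨hxG, hxle⟩ := Finset.mem_filter.1 hx
      have : x ∈ Set.range e := by
        rw [Finset.range_orderEmbOfFin]; exact hxG
      obtain ⟨l'', rfl⟩ := this
      exact Finset.mem_image.2 ⟨l'', Finset.mem_Iic.2 (e.le_iff_le.1 hxle), rfl⟩
    calc (G.filter (· ≤ e l')).card ≤ ((Finset.Iic l').image e).card :=
          Finset.card_le_card hsub
      _ ≤ (Finset.Iic l').card := Finset.card_image_le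
      _ = (l' : ℕ) + 1 := by rw [Fin.card_Iic]
      _ ≤ m := by
          have : (l' : ℕ) = (l : ℕ) := rfl
          omega

open Classical in
/-- In the authenticated Byzantine agreement with classification, suppose
`2k+1 ≤ n − t − k`, `t < n/2` (i.e. `2t+1 ≤ n`), at most `kF` faulty processes are misclassified
as honest by some honest process, at most `kH` honest processes are misclassified as faulty,
with `kF + kH ≤ k`.  Each honest process `i` sends a committee vote to exactly the processes in
the first `2k+1` positions of `π(c i)` (faulty voters are arbitrary), and the committee `C` is
the set of processes receiving votes from at least `t+1` distinct processes.  Then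
`|C ∩ F| ≤ k`, `|C ∩ H| ≥ k+1`, and `|C| ≤ 3k+1`. -/
theorem committee_stats {n t f k kF kH : ℕ}
    (H F : Finset (Fin n))
    (hpart : ∀ i, i ∈ H ∨ i ∈ F) (hdisj : Disjoint H F)
    (hF : F.card = f) (hft : f ≤ t) (htn : 2 * t + 1 ≤ n)
    (hk : 2 * k + 1 + t + k ≤ n)
    (c : Fin n → Fin n → Bool)
    (hkF : (F.filter (fun j => ∃ i ∈ H, c i j = true)).card ≤ kF)
    (hkH : (H.filter (fun j => ∃ i ∈ H, c i j = false)).card ≤ kH)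
    (hkFH : kF + kH ≤ k)
    (votes : Fin n → Finset (Fin n))  -- votes j = set of processes that voted for j
    (hvotes : ∀ j : Fin n, ∀ i ∈ H, (i ∈ votes j ↔ piPos (c i) j ≤ 2 * k + 1))
    (C : Finset (Fin n))
    (hC : C = Finset.univ.filter (fun j => t + 1 ≤ (votes j).card)) :
    (C ∩ F).card ≤ k ∧ k + 1 ≤ (C ∩ H).card ∧ C.card ≤ 3 * k + 1 := by
  -- cardinality of H
  have hHF : H ∪ F = Finset.univ := by
    apply Finset.eq_univ_of_forall
    intro i
    rcases hpart i with h | h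
    · exact Finset.mem_union_left _ h
    · exact Finset.mem_union_right _ h
  have hHcard : H.card + f = n := by
    have := Finset.card_union_of_disjoint hdisj
    rw [hHF, Finset.card_univ, Fintype.card_fin, hF] at this
    omega
  have hkHk : kH ≤ k := by omega
  have hkFk : kF ≤ k := by omega
  -- every committee member has an honest voter
  have honest_voter : ∀ j ∈ C, ∃ i ∈ H, i ∈ votes j := by
    intro j hj
    rw [hC, Finset.mem_filter] at hj
    by_contra hno
    push_neg at hno
    have hsub : votes j ⊆ F := by
      intro i hi
      rcases hpart i with h | h
      · exact absurd hi (hno i h)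
      · exact h
    have := Finset.card_le_card hsub
    omega
  -- an honest process only votes for processes it classifies as honest
  have vote_true : ∀ i ∈ H, ∀ j : Fin n, piPos (c i) j ≤ 2 * k + 1 → c i j = true := by
    intro i hi j hpos
    by_contra hfalse
    rw [Bool.not_eq_true] at hfalse
    -- count of processes classified honest by i
    have hsplit : (H.filter (fun j' => c i j' = true)).card
        + (H.filter (fun j' => ¬ (c i j' = true))).card = H.card :=
      Finset.card_filter_add_card_filter_not _
    have hmis : (H.filter (fun j' => ¬ (c i j' = true))).card ≤ kH := by
      refine le_trans (Finset.card_le_card ?_) hkH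
      intro x hx
      obtain ⟨hxH, hxf⟩ := Finset.mem_filter.1 hx
      exact Finset.mem_filter.2 ⟨hxH, ⟨i, hi, Bool.not_eq_true _ ▸ hxf⟩⟩
    set T := (Finset.univ.filter (fun j' => c i j' = true)).card with hT
    have hTH : (H.filter (fun j' => c i j' = true)).card ≤ T :=
      Finset.card_le_card (Finset.filter_subset_filter _ (Finset.subset_univ H))
    -- piPos lower bound
    have hpiPos : piPos (c i) j = (j : ℕ) + 1
        + (Finset.univ.filter (fun j' => j < j' ∧ c i j' = true)).card := by
      rw [piPos, if_neg (by simp [hfalse])]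
    have hle : (Finset.univ.filter (fun j' => j' ≤ j ∧ c i j' = true)) ⊆ Finset.Iio j := by
      intro x hx
      obtain ⟨-, hxle, hxt⟩ := Finset.mem_filter.1 hx
      rcases lt_or_eq_of_le hxle with h | h
      · exact Finset.mem_Iio.2 h
      · rw [h] at hxt; rw [hxt] at hfalse; exact absurd hfalse (by simp)
    have hje : (Finset.univ.filter (fun j' => j' ≤ j ∧ c i j' = true)).card ≤ (j : ℕ) := by
      have := Finset.card_le_card hle
      rwa [Fin.card_Iio] at this
    have hTsplit : T ≤ (Finset.univ.filter (fun j' => j' ≤ j ∧ c i j' = true)).card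
        + (Finset.univ.filter (fun j' => j < j' ∧ c i j' = true)).card := by
      rw [hT]
      refine le_trans (Finset.card_le_card_of_injOn id ?_ (Set.injOn_id _))
        (Finset.card_union_le _ _)
      intro x hx
      have hxt := (Finset.mem_filter.1 hx).2
      rcases le_or_gt x j with h | h
      · exact Finset.mem_union_left _ (Finset.mem_filter.2 ⟨Finset.mem_univ _, h, hxt⟩)
      · exact Finset.mem_union_right _ (Finset.mem_filter.2 ⟨Finset.mem_univ _, h, hxt⟩)
    omega
  -- Part 1 : |C ∩ F| ≤ k
  have part1 : (C ∩ F).card ≤ kF := by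
    refine le_trans (Finset.card_le_card ?_) hkF
    intro j hj
    obtain ⟨hjC, hjF⟩ := Finset.mem_inter.1 hj
    obtain ⟨i, hiH, hiv⟩ := honest_voter j hjC
    have hpos := (hvotes j i hiH).1 hiv
    exact Finset.mem_filter.2 ⟨hjF, ⟨i, hiH, vote_true i hiH j hpos⟩⟩
  -- the misclassified honest processes and the core set
  set B := H.filter (fun j => ∃ i ∈ H, c i j = false) with hB
  set G := H \ B with hGdef
  have hGH : G ⊆ H := Finset.sdiff_subset
  have hGtrue : ∀ i ∈ H, ∀ j ∈ G, c i j = true := by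
    intro i hi j hjG
    obtain ⟨hjH, hjnB⟩ := Finset.mem_sdiff.1 hjG
    by_contra hfalse
    rw [Bool.not_eq_true] at hfalse
    exact hjnB (Finset.mem_filter.2 ⟨hjH, ⟨i, hi, hfalse⟩⟩)
  have hBsub : B ⊆ H := Finset.filter_subset _ _
  have hGcard : H.card ≤ G.card + kH := by
    rw [hGdef, Finset.card_sdiff_of_subset hBsub]
    have := Finset.card_le_card hBsub
    omega
  -- Part 2 : k + 1 ≤ |C ∩ H|
  have part2 : k + 1 ≤ (C ∩ H).card := by
    obtain ⟨S, hSG, hScard, hSrank⟩ := rank_count_ge G (m := k + 1) (by omega)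
    have hSsub : S ⊆ C ∩ H := by
      intro j hjS
      have hjG : j ∈ G := hSG hjS
      refine Finset.mem_inter.2 ⟨?_, hGH hjG⟩
      rw [hC, Finset.mem_filter]
      refine ⟨Finset.mem_univ _, ?_⟩
      -- every honest process votes for j
      have hHvotes : H ⊆ votes j := by
        intro i hiH
        rw [hvotes j i hiH]
        have hcij : c i j = true := hGtrue i hiH j hjG
        rw [piPos, if_pos hcij]
        -- bound the honest-classified processes below j
        have hsub : Finset.univ.filter (fun j' => j' ≤ j ∧ c i j' = true)
            ⊆ (G.filter (· ≤ j)) ∪ B ∪ (F.filter (fun j' => ∃ i' ∈ H, c i' j' = true)) := by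
          intro x hx
          obtain ⟨-, hxle, hxt⟩ := Finset.mem_filter.1 hx
          rcases hpart x with hxH | hxF
          · by_cases hxB : x ∈ B
            · exact Finset.mem_union_left _ (Finset.mem_union_right _ hxB)
            · exact Finset.mem_union_left _ (Finset.mem_union_left _
                (Finset.mem_filter.2 ⟨Finset.mem_sdiff.2 ⟨hxH, hxB⟩, hxle⟩))
          · exact Finset.mem_union_right _ (Finset.mem_filter.2 ⟨hxF, ⟨i, hiH, hxt⟩⟩)
        have hrank := hSrank j hjS
        calc (Finset.univ.filter (fun j' => j' ≤ j ∧ c i j' = true)).card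
            ≤ ((G.filter (· ≤ j)) ∪ B ∪ (F.filter (fun j' => ∃ i' ∈ H, c i' j' = true))).card :=
              Finset.card_le_card hsub
          _ ≤ (G.filter (· ≤ j)).card + B.card
              + (F.filter (fun j' => ∃ i' ∈ H, c i' j' = true)).card :=
              le_trans (Finset.card_union_le _ _)
                (Nat.add_le_add_right (Finset.card_union_le _ _) _)
          _ ≤ 2 * k + 1 := by omega
      have := Finset.card_le_card hHvotes
      omega
    calc k + 1 = S.card := hScard.symm
      _ ≤ (C ∩ H).card := Finset.card_le_card hSsub
  -- Part 3 : |C ∩ H| ≤ 2k + 1 + kH, hence |C| ≤ 3k + 1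
  have part3 : (C ∩ H).card ≤ 2 * k + 1 + kH := by
    have hsub : C ∩ H ⊆ (G.filter (fun j => (G.filter (· ≤ j)).card ≤ 2 * k + 1)) ∪ B := by
      intro j hj
      obtain ⟨hjC, hjH⟩ := Finset.mem_inter.1 hj
      by_cases hjB : j ∈ B
      · exact Finset.mem_union_right _ hjB
      · have hjG : j ∈ G := Finset.mem_sdiff.2 ⟨hjH, hjB⟩
        obtain ⟨i, hiH, hiv⟩ := honest_voter j hjC
        have hpos := (hvotes j i hiH).1 hiv
        have hcij : c i j = true := hGtrue i hiH j hjG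
        rw [piPos, if_pos hcij] at hpos
        have hrank : (G.filter (· ≤ j)).card ≤ 2 * k + 1 := by
          refine le_trans (Finset.card_le_card ?_) hpos
          intro x hx
          obtain ⟨hxG, hxle⟩ := Finset.mem_filter.1 hx
          exact Finset.mem_filter.2 ⟨Finset.mem_univ _, hxle, hGtrue i hiH x hxG⟩
        exact Finset.mem_union_left _ (Finset.mem_filter.2 ⟨hjG, hrank⟩)
    have h1 := rank_count_le (n := n) (m := 2 * k + 1) G
    have h2 := Finset.card_le_card hsub
    have h3 := Finset.card_union_le
      (G.filter (fun j => (G.filter (· ≤ j)).card ≤ 2 * k + 1)) B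
    omega
  refine ⟨le_trans part1 hkFk, part2, ?_⟩
  have hCsplit : C ⊆ (C ∩ H) ∪ (C ∩ F) := by
    intro j hj
    rcases hpart j with h | h
    · exact Finset.mem_union_left _ (Finset.mem_inter.2 ⟨hj, h⟩)
    · exact Finset.mem_union_right _ (Finset.mem_inter.2 ⟨hj, h⟩)
  have := Finset.card_le_card hCsplit
  have := Finset.card_union_le (C ∩ H) (C ∩ F)
  omega
end
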